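/- Let X be a real Banach space and let Z := X × c₀(ℕ) with norm ‖(x, y)‖∞ = max(‖x‖, ‖y‖∞). Define Φ(x, y) = ‖x‖ + Σ_{n=1}^∞ (y_n)^{2n} (a finite, convergent sum for y ∈ c₀(ℕ)), and |||z||| := inf{ λ > 0 : Φ(z/λ) ≤ 1 }. Then for every z ∈ Z with |||z||| = 1, one has Φ(z) = 1. -/

import Mathlib

open Filter

/-- Membership in `c₀(ℕ)`: sequences converging to `0`. -/
def IsC0Seq (y : ℕ → ℝ) : Prop := Filter.Tendsto y Filter.atTop (nhds 0)

/-- The function `Φ(x, y) = ‖x‖ + Σ_{n=1}^∞ y_n^{2n}` on `Z = X × c₀(ℕ)`, where the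
Lean coordinate `n : ℕ` plays the role of the paper's coordinate `n + 1`. -/
noncomputable def PhiZ {X : Type*} [NormedAddCommGroup X] (z : X × (ℕ → ℝ)) : ℝ :=
  ‖z.1‖ + ∑' n : ℕ, (z.2 n) ^ (2 * (n + 1))

/-- The Minkowski functional `|||z||| = inf { λ > 0 : Φ(z/λ) ≤ 1 }` of `{Φ ≤ 1}`. -/
noncomputable def tnormZ {X : Type*} [NormedAddCommGroup X] [NormedSpace ℝ X]
    (z : X × (ℕ → ℝ)) : ℝ :=
  sInf {l : ℝ | 0 < l ∧ PhiZ (l⁻¹ • z) ≤ 1}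

lemma summable_aux (y : ℕ → ℝ) (hy : Filter.Tendsto y Filter.atTop (nhds 0)) :
    Summable (fun n => (y n) ^ (2 * (n + 1))) := by
  have h : ∀ᶠ n in atTop, |y n| ≤ 1/2 := by
    have := hy.eventually (Metric.ball_mem_nhds (0:ℝ) (by norm_num : (0:ℝ) < 1/2))
    filter_upwards [this] with n hn
    simpa [Real.dist_eq] using hn.le
  apply Summable.of_norm_bounded_eventually_nat (g := fun n => (1/2 : ℝ) ^ n)
    (summable_geometric_of_lt_one (by norm_num) (by norm_num))
  filter_upwards [h] with n hn
  have : ‖(y n) ^ (2 * (n + 1))‖ = |y n| ^ (2 * (n + 1)) := by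
    rw [Real.norm_eq_abs, abs_pow]
  rw [this]
  calc |y n| ^ (2 * (n + 1)) ≤ (1/2 : ℝ) ^ (2 * (n + 1)) :=
        pow_le_pow_left₀ (abs_nonneg _) hn _
    _ ≤ (1/2 : ℝ) ^ n := by
        apply pow_le_pow_of_le_one (by norm_num) (by norm_num)
        omega

lemma tendsto_phi {X : Type*} [NormedAddCommGroup X] [NormedSpace ℝ X]
    (z : X × (ℕ → ℝ)) (hz : IsC0Seq z.2) (t : ℕ → ℝ)
    (ht : Filter.Tendsto t Filter.atTop (nhds 1)) (hb : ∀ k, |t k| ≤ 2) :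
    Filter.Tendsto (fun k => PhiZ (t k • z)) Filter.atTop (nhds (PhiZ z)) := by
  have h1 : Filter.Tendsto (fun k => ‖(t k • z).1‖) atTop (nhds ‖z.1‖) := by
    have : Filter.Tendsto (fun k => t k • z.1) atTop (nhds ((1:ℝ) • z.1)) :=
      ht.smul tendsto_const_nhds
    rw [one_smul] at this
    exact this.norm
  have h2 : Filter.Tendsto (fun k => ∑' n, ((t k • z).2 n) ^ (2 * (n + 1))) atTop
      (nhds (∑' n, (z.2 n) ^ (2 * (n + 1)))) := by
    have hbnd : Summable (fun n => (2 * |z.2 n|) ^ (2 * (n + 1))) := by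
      apply summable_aux
      have : Filter.Tendsto (fun n => 2 * |z.2 n|) atTop (nhds (2 * |(0:ℝ)|)) :=
        (tendsto_const_nhds.mul hz.abs)
      simpa using this
    refine tendsto_tsum_of_dominated_convergence hbnd (fun n => ?_) ?_
    · have : Filter.Tendsto (fun k => (t k * z.2 n) ^ (2 * (n + 1))) atTop
          (nhds ((1 * z.2 n) ^ (2 * (n + 1)))) :=
        (ht.mul tendsto_const_nhds).pow _
      simpa using this
    · refine Filter.Eventually.of_forall (fun k n => ?_)
      simp only [Prod.smul_snd, Pi.smul_apply, smul_eq_mul]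
      rw [Real.norm_eq_abs, abs_pow]
      apply pow_le_pow_left₀ (abs_nonneg _)
      calc |t k * z.2 n| = |t k| * |z.2 n| := abs_mul _ _
        _ ≤ 2 * |z.2 n| := by
            apply mul_le_mul_of_nonneg_right (hb k) (abs_nonneg _)
  simpa only [PhiZ] using h1.add h2

/-- On `Z = X × c₀(ℕ)`, every element of the `|||·|||`-unit sphere satisfies
`Φ(z) = 1`. -/
theorem PhiZ_eq_one_on_unit_sphere
    {X : Type*} [NormedAddCommGroup X] [NormedSpace ℝ X] [CompleteSpace X]
    (z : X × (ℕ → ℝ)) (hz : IsC0Seq z.2) (h1 : tnormZ z = 1) :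
    PhiZ z = 1 := by
  set S := {l : ℝ | 0 < l ∧ PhiZ (l⁻¹ • z) ≤ 1} with hS
  have hinf : sInf S = 1 := h1
  have hbdd : BddBelow S := ⟨0, fun l hl => hl.1.le⟩
  have hne : S.Nonempty := by
    by_contra hcon
    rw [Set.not_nonempty_iff_eq_empty] at hcon
    rw [hcon, Real.sInf_empty] at hinf
    norm_num at hinf
  have hge : ∀ l ∈ S, (1:ℝ) ≤ l := fun l hl => hinf ▸ csInf_le hbdd hl
  -- Step 1: PhiZ z ≤ 1
  have hle : PhiZ z ≤ 1 := by
    have hsel : ∀ k : ℕ, ∃ l, l ∈ S ∧ l < 1 + 1/(k+1) := by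
      intro k
      apply exists_lt_of_csInf_lt hne
      rw [hinf]
      have : (0:ℝ) < 1/(k+1) := by positivity
      linarith
    choose l hlS hlub using hsel
    have hl1 : ∀ k, (1:ℝ) ≤ l k := fun k => hge _ (hlS k)
    have hlt : Filter.Tendsto l atTop (nhds 1) := by
      have hub : Filter.Tendsto (fun k : ℕ => 1 + 1/((k:ℝ)+1)) atTop (nhds 1) := by
        have := tendsto_one_div_add_atTop_nhds_zero_nat (𝕜 := ℝ)
        simpa using tendsto_const_nhds.add this
      exact tendsto_of_tendsto_of_tendsto_of_le_of_le tendsto_const_nhds hub hl1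
        (fun k => (hlub k).le)
    have htinv : Filter.Tendsto (fun k => (l k)⁻¹) atTop (nhds 1) := by
      simpa using hlt.inv₀ one_ne_zero
    have hb : ∀ k, |(l k)⁻¹| ≤ 2 := by
      intro k
      have h0 : (0:ℝ) < l k := lt_of_lt_of_le one_pos (hl1 k)
      rw [abs_of_pos (inv_pos.2 h0)]
      calc (l k)⁻¹ ≤ 1 := inv_le_one_of_one_le₀ (hl1 k)
        _ ≤ 2 := one_le_two
    have := tendsto_phi z hz (fun k => (l k)⁻¹) htinv hb
    exact le_of_tendsto this (Filter.Eventually.of_forall (fun k => (hlS k).2))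
  -- Step 2: PhiZ z ≥ 1
  have hge1 : 1 ≤ PhiZ z := by
    by_contra hcon
    push_neg at hcon
    set l : ℕ → ℝ := fun k => 1 - 1/((k:ℝ)+2) with hl
    have hl0 : ∀ k, (0:ℝ) < l k := by
      intro k
      have h2 : (1:ℝ)/((k:ℝ)+2) ≤ 1/2 := by
        apply div_le_div_of_nonneg_left one_pos.le two_pos
        have : (0:ℝ) ≤ (k:ℝ) := Nat.cast_nonneg k
        linarith
      have : (0:ℝ) < 1/((k:ℝ)+2) := by positivity
      simp only [hl]
      linarith
    have hlhalf : ∀ k, (1/2:ℝ) ≤ l k := by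
      intro k
      have h2 : (1:ℝ)/((k:ℝ)+2) ≤ 1/2 := by
        apply div_le_div_of_nonneg_left one_pos.le two_pos
        have : (0:ℝ) ≤ (k:ℝ) := Nat.cast_nonneg k
        linarith
      simp only [hl]; linarith
    have hllt1 : ∀ k, l k < 1 := by
      intro k
      have : (0:ℝ) < 1/((k:ℝ)+2) := by positivity
      simp only [hl]; linarith
    have hlt : Filter.Tendsto l atTop (nhds 1) := by
      have : Filter.Tendsto (fun k : ℕ => 1/((k:ℝ)+2)) atTop (nhds 0) := by
        have h := (tendsto_one_div_add_atTop_nhds_zero_nat (𝕜 := ℝ)).comp (tendsto_add_atTop_nat 1)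
        exact h.congr (fun k => by simp [Function.comp]; push_cast; ring_nf)
      simpa [hl] using tendsto_const_nhds.sub this
    have htinv : Filter.Tendsto (fun k => (l k)⁻¹) atTop (nhds 1) := by
      simpa using hlt.inv₀ one_ne_zero
    have hb : ∀ k, |(l k)⁻¹| ≤ 2 := by
      intro k
      rw [abs_of_pos (inv_pos.2 (hl0 k))]
      rw [inv_le_comm₀ (hl0 k) two_pos]
      calc (2:ℝ)⁻¹ = 1/2 := by norm_num
        _ ≤ l k := hlhalf k
    have htend := tendsto_phi z hz (fun k => (l k)⁻¹) htinv hb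
    have hev : ∀ᶠ k in atTop, PhiZ ((l k)⁻¹ • z) < 1 :=
      htend.eventually (eventually_lt_nhds hcon)
    obtain ⟨k, hk⟩ := hev.exists
    have : l k ∈ S := ⟨hl0 k, hk.le⟩
    exact absurd (hge _ this) (not_le.2 (hllt1 k))
  linarith
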